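/- Let f : ℝ → ℝ be continuous with antiderivative F (F' = f), let c, E ∈ ℝ, let I ⊆ ℝ be an open interval, and let u : ℝ × I → ℝ be a C² family such that for every a ∈ I and every x ∈ ℝ both (c/2)·(∂ₓu(x,a))² - ((c-1)/2)·u(x,a)² + F(u(x,a)) = a·u(x,a) + E and c·∂ₓ²u(x,a) - (c-1)·u(x,a) + f(u(x,a)) = a hold. Then c·(∂ₓu(x,a)·∂ₓ∂ₐu(x,a) - ∂ₐu(x,a)·∂ₓ²u(x,a)) = u(x,a) for all (x,a) ∈ ℝ × I. -/

import Mathlib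

/-- The Jacobian identity `c {u, u_x}_{x,a} = u`: for a family of profiles
satisfying both the quadrature relation and the profile equation,
`c (u_x (u_a)_x - u_a u_xx) = u`. -/
theorem stmt_8 (f F : ℝ → ℝ) (hf : Continuous f) (hF : ∀ y : ℝ, HasDerivAt F (f y) y)
    (c E : ℝ) (I : Set ℝ) (hI : IsOpen I) (hIconn : I.OrdConnected)
    (u : ℝ → ℝ → ℝ) (hu : ContDiff ℝ 2 (Function.uncurry u))
    (hquad : ∀ a ∈ I, ∀ x : ℝ,
      (c / 2) * (deriv (fun y => u y a) x) ^ 2 - ((c - 1) / 2) * (u x a) ^ 2 + F (u x a)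
        = a * u x a + E)
    (hprof : ∀ a ∈ I, ∀ x : ℝ,
      c * deriv (deriv (fun y => u y a)) x - (c - 1) * u x a + f (u x a) = a) :
    ∀ a ∈ I, ∀ x : ℝ,
      c * (deriv (fun y => u y a) x * deriv (fun y => deriv (fun t => u y t) a) x
        - deriv (fun t => u x t) a * deriv (deriv (fun y => u y a)) x) = u x a := by
  intro a ha x
  set g : ℝ × ℝ → ℝ := Function.uncurry u with hg_def
  have hgdiff : Differentiable ℝ g := hu.differentiable (by norm_num)
  have hg1 : ContDiff ℝ 1 (fderiv ℝ g) := hu.fderiv_right (by norm_num)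
  have hg1d : Differentiable ℝ (fderiv ℝ g) := hg1.differentiable (by norm_num)
  -- curves
  have hcx : ∀ (x a : ℝ), HasDerivAt (fun y : ℝ => (y, a)) ((1 : ℝ), (0 : ℝ)) x :=
    fun x a => (hasDerivAt_id x).prodMk (hasDerivAt_const x a)
  have hca : ∀ (x a : ℝ), HasDerivAt (fun t : ℝ => (x, t)) ((0 : ℝ), (1 : ℝ)) a :=
    fun x a => (hasDerivAt_const a x).prodMk (hasDerivAt_id a)
  -- first partials
  have hA : ∀ (x a : ℝ), HasDerivAt (fun y => u y a) (fderiv ℝ g (x, a) (1, 0)) x := by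
    intro x a
    exact (hgdiff (x, a)).hasFDerivAt.comp_hasDerivAt x (hcx x a)
  have hB : ∀ (x a : ℝ), HasDerivAt (fun t => u x t) (fderiv ℝ g (x, a) (0, 1)) a := by
    intro x a
    exact (hgdiff (x, a)).hasFDerivAt.comp_hasDerivAt a (hca x a)
  -- second partial machinery
  have hApp : ∀ (v : ℝ × ℝ) (p : ℝ × ℝ), HasFDerivAt (fun q => fderiv ℝ g q v)
      ((ContinuousLinearMap.apply ℝ ℝ v).comp (fderiv ℝ (fderiv ℝ g) p)) p := by
    intro v p
    exact (ContinuousLinearMap.apply ℝ ℝ v).hasFDerivAt.comp p (hg1d p).hasFDerivAt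
  -- derivative in a of x-partial
  have hAx : HasDerivAt (fun t => fderiv ℝ g (x, t) (1, 0))
      (fderiv ℝ (fderiv ℝ g) (x, a) (0, 1) (1, 0)) a :=
    (hApp (1, 0) (x, a)).comp_hasDerivAt a (hca x a)
  -- derivative in x of a-partial
  have hBx : HasDerivAt (fun y => fderiv ℝ g (y, a) (0, 1))
      (fderiv ℝ (fderiv ℝ g) (x, a) (1, 0) (0, 1)) x :=
    by have := (hApp (0, 1) (x, a)).comp_hasDerivAt x (hcx x a); exact this
  -- symmetry of second derivative
  have hsym : fderiv ℝ (fderiv ℝ g) (x, a) (1, 0) (0, 1)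
      = fderiv ℝ (fderiv ℝ g) (x, a) (0, 1) (1, 0) := by
    have := hu.contDiffAt (x := (x, a))
    exact (this.isSymmSndFDerivAt (by norm_num)) (1, 0) (0, 1)
  -- identify the mixed partial in the goal
  have hMfun : (fun y => deriv (fun t => u y t) a) = fun y => fderiv ℝ g (y, a) (0, 1) := by
    funext y; exact (hB y a).deriv
  have hM : deriv (fun y => deriv (fun t => u y t) a) x
      = fderiv ℝ (fderiv ℝ g) (x, a) (0, 1) (1, 0) := by
    rw [hMfun, hBx.deriv, hsym]
  -- abbreviations
  set U : ℝ := u x a with hU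
  set U' : ℝ := fderiv ℝ g (x, a) (0, 1) with hU'
  set A : ℝ := fderiv ℝ g (x, a) (1, 0) with hA0
  set M : ℝ := fderiv ℝ (fderiv ℝ g) (x, a) (0, 1) (1, 0) with hM0
  set D : ℝ := deriv (deriv (fun y => u y a)) x with hD
  -- differentiate the quadrature relation in a
  have hL : HasDerivAt
      (fun t => (c / 2) * (fderiv ℝ g (x, t) (1, 0)) ^ 2 - ((c - 1) / 2) * (u x t) ^ 2
        + F (u x t))
      (c * A * M - (c - 1) * U * U' + f U * U') a := by
    have h1 : HasDerivAt (fun t => (c / 2) * (fderiv ℝ g (x, t) (1, 0)) ^ 2)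
        ((c / 2) * (2 * A ^ 1 * M)) a := ((hAx.pow 2).const_mul (c / 2))
    have h2 : HasDerivAt (fun t => ((c - 1) / 2) * (u x t) ^ 2)
        (((c - 1) / 2) * (2 * U ^ 1 * U')) a := (((hB x a).pow 2).const_mul ((c - 1) / 2))
    have h3 : HasDerivAt (fun t => F (u x t)) (f U * U') a := (hF U).comp a (hB x a)
    have := (h1.fun_sub h2).fun_add h3
    refine this.congr_deriv ?_
    ring
  have hR : HasDerivAt (fun t => t * u x t + E) (1 * U + a * U') a :=
    ((hasDerivAt_id a).mul (hB x a)).add_const E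
  have heq : (fun t => t * u x t + E) =ᶠ[nhds a]
      (fun t => (c / 2) * (fderiv ℝ g (x, t) (1, 0)) ^ 2 - ((c - 1) / 2) * (u x t) ^ 2
        + F (u x t)) := by
    filter_upwards [hI.mem_nhds ha] with t ht
    have := hquad t ht x
    rw [(hA x t).deriv] at this
    exact this.symm
  have hderiv_eq : c * A * M - (c - 1) * U * U' + f U * U' = 1 * U + a * U' :=
    hL.unique (hR.congr_of_eventuallyEq heq.symm)
  -- the profile equation
  have hp : c * D - (c - 1) * U + f U = a := hprof a ha x
  -- finish
  have hAg : deriv (fun y => u y a) x = A := (hA x a).deriv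
  have hBg : deriv (fun t => u x t) a = U' := (hB x a).deriv
  rw [hAg, hBg, hM]
  linear_combination hderiv_eq - U' * hp
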